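/- arXiv:2507.02999 — 2 statements merged into one kernel-verified Lean document; each statement's English description precedes it below -/
import Mathlib

section
/- Let d ≥ 1 be a natural number, a > 0 and r ≥ 0 real numbers. Then ∫₀^r (sinh(a·t)/a)^{d−1} dt ≥ (r^d / d) · e^{−(d−1)·a·r}. -/
/-- `u * exp (-u) ≤ sinh u` for all real `u` (used with `u ≥ 0`). -/
lemma mul_exp_neg_le_sinh (u : ℝ) : u * Real.exp (-u) ≤ Real.sinh u := by
  have hE := Real.exp_pos u
  have h2u : 2 * u + 1 ≤ Real.exp u ^ 2 := by
    have h := Real.add_one_le_exp (2 * u)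
    rw [two_mul, Real.exp_add, ← sq] at h
    linarith
  rw [Real.sinh_eq, Real.exp_neg]
  have hinv : (Real.exp u)⁻¹ * Real.exp u = 1 := inv_mul_cancel₀ (ne_of_gt hE)
  rw [le_div_iff₀ (by norm_num : (0:ℝ) < 2)]
  have : u * (Real.exp u)⁻¹ * 2 * Real.exp u ≤ (Real.exp u - (Real.exp u)⁻¹) * Real.exp u := by
    nlinarith [hinv, hE]
  exact le_of_mul_le_mul_right this hE

/-- For `d ≥ 1`, `a > 0`, `r ≥ 0`:
`∫₀^r (sinh (a t) / a)^(d-1) dt ≥ (r^d / d) e^(-(d-1) a r)`. -/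
theorem integral_sinh_pow_ge (d : ℕ) (hd : 1 ≤ d) (a r : ℝ) (ha : 0 < a) (hr : 0 ≤ r) :
    r ^ d / d * Real.exp (-(((d : ℝ) - 1) * a * r)) ≤
      ∫ t in (0:ℝ)..r, (Real.sinh (a * t) / a) ^ (d - 1) := by
  set c : ℝ := Real.exp (-(a * r)) with hc
  have key : ∀ t ∈ Set.Icc (0:ℝ) r,
      t ^ (d-1) * c ^ (d-1) ≤ (Real.sinh (a * t) / a) ^ (d - 1) := by
    intro t ht
    obtain ⟨ht0, htr⟩ := ht
    have h1 : t * c ≤ Real.sinh (a * t) / a := by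
      have h2 : a * t * Real.exp (-(a * t)) ≤ Real.sinh (a * t) :=
        mul_exp_neg_le_sinh (a * t)
      have h3 : t * c ≤ t * Real.exp (-(a * t)) := by
        apply mul_le_mul_of_nonneg_left _ ht0
        exact Real.exp_le_exp.2 (by nlinarith)
      have h4 : t * Real.exp (-(a * t)) ≤ Real.sinh (a * t) / a := by
        rw [le_div_iff₀ ha]; nlinarith
      linarith
    calc t ^ (d-1) * c ^ (d-1) = (t * c) ^ (d-1) := (mul_pow _ _ _).symm
      _ ≤ (Real.sinh (a * t) / a) ^ (d-1) :=
          pow_le_pow_left₀ (mul_nonneg ht0 (Real.exp_pos _).le) h1 _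
  have cont : Continuous fun t : ℝ => (Real.sinh (a * t) / a) ^ (d - 1) := by
    fun_prop
  have hmono : ∫ t in (0:ℝ)..r, t ^ (d-1) * c ^ (d-1) ≤
      ∫ t in (0:ℝ)..r, (Real.sinh (a * t) / a) ^ (d - 1) := by
    apply intervalIntegral.integral_mono_on hr _ (cont.intervalIntegrable _ _) key
    exact (((continuous_id.pow _).mul continuous_const)).intervalIntegrable _ _
  have hcomp : ∫ t in (0:ℝ)..r, t ^ (d-1) * c ^ (d-1)
      = (r ^ d - 0 ^ d) / d * c ^ (d-1) := by
    rw [intervalIntegral.integral_mul_const, integral_pow]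
    rw [Nat.sub_add_cancel hd]
    push_cast [Nat.cast_sub hd]
    ring_nf
  have hcpow : c ^ (d-1) = Real.exp (-(((d : ℝ) - 1) * a * r)) := by
    rw [hc, ← Real.exp_nat_mul]
    congr 1
    push_cast [Nat.cast_sub hd]
    ring
  rw [hcomp, hcpow] at hmono
  have h0 : (0:ℝ) ^ d = 0 := zero_pow (by omega)
  rw [h0] at hmono
  simpa using hmono
end

section
/- Let (X, d) be a nonempty compact metric space equipped with a finite Borel measure μ, let L > 0, B > 0, ε > 0, and let v > 0 be such that every closed ball of radius ε/(4L) in X has μ-measure at least v. Then there exists a finite family G of functions from X to ℝ with cardinality at most (⌈4B/ε⌉ + 1)^{⌊μ(X)/v⌋} such that for every L-Lipschitz function f : X → ℝ with |f(x)| ≤ B for all x, there exists g ∈ G with sup_{x ∈ X} |f(x) − g(x)| ≤ ε. Equivalently, log N(F, ε, ‖·‖_∞) ≤ (μ(X)/v) · log(⌈4B/ε⌉ + 1) for the class F of L-Lipschitz functions bounded by B. -/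
open MeasureTheory Metric ENNReal

/-- Combined covering bound (Theorems 1 + 2): on a compact metric measure space in which
every closed ball of radius `ε/(4L)` has measure at least `v > 0`, the class of
`L`-Lipschitz functions bounded by `B` admits an `ε`-cover in the sup norm of
cardinality at most `(⌈4B/ε⌉ + 1)^⌊μ(X)/v⌋`. -/
theorem lipschitz_class_covering_of_measure
    {X : Type*} [MetricSpace X] [Nonempty X] [CompactSpace X] [MeasurableSpace X] [BorelSpace X]
    (μ : Measure X) [IsFiniteMeasure μ] (L B ε v : ℝ)
    (hL : 0 < L) (hB : 0 < B) (hε : 0 < ε) (hv : 0 < v)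
    (hball : ∀ x : X, ENNReal.ofReal v ≤ μ (closedBall x (ε / (4 * L)))) :
    ∃ G : Finset (X → ℝ), G.card ≤ (⌈4 * B / ε⌉₊ + 1) ^ ⌊(μ Set.univ).toReal / v⌋₊ ∧
      ∀ f : X → ℝ, (∀ x y : X, |f x - f y| ≤ L * dist x y) → (∀ x : X, |f x| ≤ B) →
        ∃ g ∈ G, ∀ x : X, |f x - g x| ≤ ε := by
  classical
  set r : ℝ := ε / (4 * L) with hr_def
  have hr : 0 < r := by positivity
  set M : ℕ := ⌊(μ Set.univ).toReal / v⌋₊ with hM_def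
  -- any (2r)-separated finset has cardinality at most M
  have card_bound : ∀ t : Finset X,
      (∀ p ∈ t, ∀ q ∈ t, p ≠ q → 2 * r < dist p q) → t.card ≤ M := by
    intro t hsep
    have hdisj : (t : Set X).PairwiseDisjoint (fun p => closedBall p r) := by
      intro p hp q hq hpq
      refine Set.disjoint_left.2 ?_
      intro z hz hz'
      have h1 : dist z p ≤ r := mem_closedBall.1 hz
      have h2 : dist z q ≤ r := mem_closedBall.1 hz'
      have h3 : dist p q ≤ 2 * r := by
        calc dist p q ≤ dist p z + dist z q := dist_triangle _ _ _
          _ ≤ r + r := by rw [dist_comm p z]; linarith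
          _ = 2 * r := by ring
      have := hsep p hp q hq hpq
      linarith
    have hsum : (t.card : ℝ≥0∞) * ENNReal.ofReal v ≤ μ Set.univ := by
      calc (t.card : ℝ≥0∞) * ENNReal.ofReal v = ∑ _p ∈ t, ENNReal.ofReal v := by
            rw [Finset.sum_const, nsmul_eq_mul]
        _ ≤ ∑ p ∈ t, μ (closedBall p r) := Finset.sum_le_sum fun p _ => hball p
        _ = μ (⋃ p ∈ t, closedBall p r) :=
            (measure_biUnion_finset hdisj fun p _ => measurableSet_closedBall).symm
        _ ≤ μ Set.univ := measure_mono (Set.subset_univ _)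
    have hsum' : ENNReal.ofReal ((t.card : ℝ) * v) ≤ μ Set.univ := by
      rwa [ENNReal.ofReal_mul (by positivity), ENNReal.ofReal_natCast]
    have hreal : (t.card : ℝ) * v ≤ (μ Set.univ).toReal :=
      (ENNReal.ofReal_le_iff_le_toReal (measure_ne_top μ _)).1 hsum'
    exact Nat.le_floor ((le_div_iff₀ hv).2 hreal)
  -- a separated set of maximal cardinality
  obtain ⟨t, htsep, htmax⟩ : ∃ t : Finset X,
      (∀ p ∈ t, ∀ q ∈ t, p ≠ q → 2 * r < dist p q) ∧
      ∀ t' : Finset X, (∀ p ∈ t', ∀ q ∈ t', p ≠ q → 2 * r < dist p q) → t'.card ≤ t.card := by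
    set P : ℕ → Prop := fun n => ∃ t : Finset X,
      (∀ p ∈ t, ∀ q ∈ t, p ≠ q → 2 * r < dist p q) ∧ t.card = n with hP
    have h0 : P 0 := ⟨∅, by simp, rfl⟩
    obtain ⟨t, ht, hcard⟩ := Nat.findGreatest_spec (Nat.zero_le M) h0
    exact ⟨t, ht, fun t' ht' =>
      hcard ▸ Nat.le_findGreatest (card_bound t' ht') ⟨t', ht', rfl⟩⟩
  -- t is a (2r)-net
  have hnet : ∀ x : X, ∃ y ∈ t, dist x y ≤ 2 * r := by
    intro x
    by_contra h
    push_neg at h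
    have hx : x ∉ t := by
      intro hx
      have := h x hx
      simp only [dist_self] at this
      linarith
    have hsep' : ∀ p ∈ insert x t, ∀ q ∈ insert x t, p ≠ q → 2 * r < dist p q := by
      intro p hp q hq hpq
      rcases Finset.mem_insert.1 hp with hpx | hpt
      · rcases Finset.mem_insert.1 hq with hqx | hqt
        · exact absurd (hpx.trans hqx.symm) hpq
        · rw [hpx]; exact h q hqt
      · rcases Finset.mem_insert.1 hq with hqx | hqt
        · rw [hqx, dist_comm]; exact h p hpt
        · exact htsep p hpt q hqt hpq
    have := htmax _ hsep'
    rw [Finset.card_insert_of_notMem hx] at this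
    omega
  choose c hc1 hc2 using hnet
  -- grid
  set k : ℕ := ⌈4 * B / ε⌉₊ with hk_def
  have hk0 : 0 < k := Nat.ceil_pos.2 (by positivity)
  have hkR : (0:ℝ) < k := by exact_mod_cast hk0
  set s : ℝ := 2 * B / k with hs_def
  have hs : 0 < s := by positivity
  have hsε : s ≤ ε / 2 := by
    have hle : 4 * B / ε ≤ (k : ℝ) := Nat.le_ceil _
    rw [hs_def, div_le_iff₀ hkR]
    rw [div_le_iff₀ hε] at hle
    nlinarith
  have h2Bs : 2 * B / s = (k : ℝ) := by
    rw [hs_def]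
    field_simp
  set Q : Finset ℝ := (Finset.range (k + 1)).image (fun i : ℕ => -B + (i : ℝ) * s) with hQ_def
  have hQcard : Q.card ≤ k + 1 := by
    calc Q.card ≤ (Finset.range (k + 1)).card := Finset.card_image_le
      _ = k + 1 := Finset.card_range _
  have hgrid : ∀ a : ℝ, |a| ≤ B → ∃ q : ↥Q, |a - (q : ℝ)| ≤ ε / 2 := by
    intro a ha
    rw [abs_le] at ha
    have hnn : 0 ≤ (a + B) / s := div_nonneg (by linarith) hs.le
    set i : ℕ := ⌊(a + B) / s⌋₊ with hi_def
    have hik : i ≤ k := by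
      have : (a + B) / s ≤ 2 * B / s := by
        gcongr
        linarith
      calc i ≤ ⌊2 * B / s⌋₊ := Nat.floor_le_floor this
        _ = k := by rw [h2Bs, Nat.floor_natCast]
    have h1 : (i : ℝ) * s ≤ a + B := by
      have := Nat.floor_le hnn
      calc (i : ℝ) * s ≤ ((a + B) / s) * s := by
            apply mul_le_mul_of_nonneg_right _ hs.le
            exact_mod_cast this
        _ = a + B := by field_simp
    have h2 : a + B < ((i : ℝ) + 1) * s := by
      have := Nat.lt_floor_add_one ((a + B) / s)
      calc a + B = ((a + B) / s) * s := by field_simp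
        _ < ((i : ℝ) + 1) * s := by
            apply mul_lt_mul_of_pos_right _ hs
            exact_mod_cast this
    have hmem : (-B + (i : ℝ) * s) ∈ Q :=
      Finset.mem_image.2 ⟨i, Finset.mem_range.2 (Nat.lt_succ_of_le hik), rfl⟩
    refine ⟨⟨-B + (i : ℝ) * s, hmem⟩, ?_⟩
    rw [abs_le]
    constructor <;> nlinarith
  -- the cover
  have ht_mem : ∀ x : X, c x ∈ t := hc1
  let F : (↥t → ↥Q) → (X → ℝ) := fun σ => fun x => (σ ⟨c x, hc1 x⟩ : ℝ)
  refine ⟨Finset.image F Finset.univ, ?_, ?_⟩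
  · calc (Finset.image F Finset.univ).card ≤ (Finset.univ : Finset (↥t → ↥Q)).card :=
          Finset.card_image_le
      _ = Fintype.card ↥Q ^ Fintype.card ↥t := by
          rw [Finset.card_univ, Fintype.card_fun]
      _ = Q.card ^ t.card := by rw [Fintype.card_coe, Fintype.card_coe]
      _ ≤ (k + 1) ^ t.card := Nat.pow_le_pow_left hQcard _
      _ ≤ (k + 1) ^ M := Nat.pow_le_pow_right (by omega) (card_bound t htsep)
  · intro f hlip hbdd
    choose σ hσ using fun y : ↥t => hgrid (f y) (hbdd y)
    refine ⟨F σ, Finset.mem_image.2 ⟨σ, Finset.mem_univ _, rfl⟩, ?_⟩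
    intro x
    have h1 : |f x - f (c x)| ≤ L * dist x (c x) := hlip x (c x)
    have h2 : |f (c x) - (σ ⟨c x, hc1 x⟩ : ℝ)| ≤ ε / 2 := hσ ⟨c x, hc1 x⟩
    have h3 : L * dist x (c x) ≤ L * (2 * r) :=
      mul_le_mul_of_nonneg_left (hc2 x) hL.le
    have h4 : L * (2 * r) = ε / 2 := by
      rw [hr_def]; field_simp; ring
    have h5 : |f x - F σ x| ≤ |f x - f (c x)| + |f (c x) - F σ x| := abs_sub_le _ _ _
    have : F σ x = (σ ⟨c x, hc1 x⟩ : ℝ) := rfl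
    rw [this] at h5
    linarith
end
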